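/- If x and y are two distinct solutions of the variational monotone recurrence relation (with strong twist condition) on all of Z, and x_i ≥ y_i for all i in Z, then x_i > y_i strictly for all i in Z. -/

import Mathlib

open Finset Filter Topology

noncomputable def d1 (f : ℝ → ℝ → ℝ) (ν μ : ℝ) : ℝ := deriv (fun t => f t μ) ν
noncomputable def d2 (f : ℝ → ℝ → ℝ) (ν μ : ℝ) : ℝ := deriv (fun t => f ν t) μ
noncomputable def d11 (f : ℝ → ℝ → ℝ) (ν μ : ℝ) : ℝ := deriv (fun t => d1 f t μ) ν
noncomputable def d12 (f : ℝ → ℝ → ℝ) (ν μ : ℝ) : ℝ := deriv (fun t => d2 f t μ) ν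
noncomputable def d22 (f : ℝ → ℝ → ℝ) (ν μ : ℝ) : ℝ := deriv (fun t => d2 f ν t) μ

/-- The local energy at site `i` of the sequence `z`:  `S_i(z) = ∑_{j=1}^r f_j(z_i, z_{i+j})`. -/
noncomputable def siteE (r : ℕ) (f : ℕ → ℝ → ℝ → ℝ) (z : ℤ → ℝ) (i : ℤ) : ℝ :=
  ∑ j ∈ Finset.Icc 1 r, f j (z i) (z (i + j))

/-- `W_B` for the segment `B = [a,b] ⊂ ℤ`. -/
noncomputable def Wseg (r : ℕ) (f : ℕ → ℝ → ℝ → ℝ) (a b : ℤ) (z : ℤ → ℝ) : ℝ :=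
  ∑ i ∈ Finset.Icc a b, siteE r f z i

/-- A global minimizer: for every segment with interior `[a,b]` and every variation `v`
supported in `[a,b]`, the energy does not decrease. -/
def IsGlobalMin (r : ℕ) (f : ℕ → ℝ → ℝ → ℝ) (x : ℤ → ℝ) : Prop :=
  ∀ a b : ℤ, ∀ v : ℤ → ℝ, (∀ i, v i ≠ 0 → i ∈ Finset.Icc a b) →
    Wseg r f (a - r) b x ≤ Wseg r f (a - r) b (x + v)

/-- The variational monotone recurrence relation `∑_{j=i-r}^{i} ∂_i S_j(x) = 0` at site `i`. -/
def SolvesEL (r : ℕ) (f : ℕ → ℝ → ℝ → ℝ) (x : ℤ → ℝ) (i : ℤ) : Prop :=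
  (∑ j ∈ Finset.Icc 1 r, (d1 (f j) (x i) (x (i + j)) + d2 (f j) (x (i - j)) (x i))) = 0

/-- A local energy of range `r` in the sense of Definition 1.5 of the paper. -/
structure LocalEnergy (r : ℕ) (K lam : ℝ) where
  f : ℕ → ℝ → ℝ → ℝ
  smooth : ∀ j, ContDiff ℝ 2 (fun p : ℝ × ℝ => f j p.1 p.2)
  periodic : ∀ j ν μ, f j (ν + 1) (μ + 1) = f j ν μ
  bound11 : ∀ j ν μ, |d11 (f j) ν μ| ≤ K / r
  bound12 : ∀ j ν μ, |d12 (f j) ν μ| ≤ K / r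
  bound22 : ∀ j ν μ, |d22 (f j) ν μ| ≤ K / r
  coercive : ∀ j ∈ Finset.Icc 1 r, ∀ C : ℝ, ∃ R : ℝ, ∀ ν μ : ℝ, R ≤ |ν - μ| → C ≤ f j ν μ
  twist : ∀ j ∈ Finset.Icc 1 r, ∀ ν μ : ℝ, d12 (f j) ν μ ≤ -lam

/-- `x` and `y` are weakly ordered on the set `s`. -/
def WOrd (x y : ℤ → ℝ) (s : Set ℤ) : Prop :=
  (∀ i ∈ s, x i ≤ y i) ∨ (∀ i ∈ s, y i ≤ x i)

/-- `D` is an interval outside of which (on both components of the complement)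
`x` and `y` are weakly ordered. -/
def CrossProp (x y : ℤ → ℝ) (D : Set ℤ) : Prop :=
  D.OrdConnected ∧ WOrd x y {i | ∀ j ∈ D, i < j} ∧ WOrd x y {i | ∀ j ∈ D, j < i}

/-- The domain of crossing of `x` and `y`: the minimal interval `D` such that `x` and `y`
are weakly ordered on the connected components of its complement. -/
def IsCrossingDomain (x y : ℤ → ℝ) (D : Set ℤ) : Prop :=
  CrossProp x y D ∧ ∀ D' : Set ℤ, CrossProp x y D' → D ⊆ D'

/-- The translation `(τ_{k,l} x)_i = x_{i-k} + l`. -/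
def transl (k l : ℤ) (x : ℤ → ℝ) : ℤ → ℝ := fun i => x (i - k) + l

/-- The Birkhoff property. -/
def Birkhoff (x : ℤ → ℝ) : Prop :=
  ∀ k l : ℤ, (∀ i, transl k l x i ≤ x i) ∨ (∀ i, x i ≤ transl k l x i)

section aux
variable (g : ℝ → ℝ → ℝ) (hg : ContDiff ℝ 2 (fun p : ℝ × ℝ => g p.1 p.2))
include hg

lemma hasDerivAt_d1aux (ν μ : ℝ) :
    HasDerivAt (fun t => g t μ) (fderiv ℝ (fun p : ℝ × ℝ => g p.1 p.2) (ν, μ) (1, 0)) ν := by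
  have h1 : HasDerivAt (fun t : ℝ => (t, μ)) ((1:ℝ), (0:ℝ)) ν :=
    (hasDerivAt_id ν).prodMk (hasDerivAt_const ν μ)
  exact ((hg.differentiable (by norm_num)).differentiableAt.hasFDerivAt).comp_hasDerivAt ν h1

lemma hasDerivAt_d2aux (ν μ : ℝ) :
    HasDerivAt (fun t => g ν t) (fderiv ℝ (fun p : ℝ × ℝ => g p.1 p.2) (ν, μ) (0, 1)) μ := by
  have h1 : HasDerivAt (fun t : ℝ => (ν, t)) ((0:ℝ), (1:ℝ)) μ :=
    (hasDerivAt_const μ ν).prodMk (hasDerivAt_id μ)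
  exact ((hg.differentiable (by norm_num)).differentiableAt.hasFDerivAt).comp_hasDerivAt μ h1

lemma d1_eq (ν μ : ℝ) : d1 g ν μ = fderiv ℝ (fun p : ℝ × ℝ => g p.1 p.2) (ν, μ) (1, 0) :=
  (hasDerivAt_d1aux g hg ν μ).deriv

lemma d2_eq (ν μ : ℝ) : d2 g ν μ = fderiv ℝ (fun p : ℝ × ℝ => g p.1 p.2) (ν, μ) (0, 1) :=
  (hasDerivAt_d2aux g hg ν μ).deriv

lemma hasDerivAt_d2_fst (ν μ : ℝ) :
    HasDerivAt (fun t => d2 g t μ)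
      (fderiv ℝ (fderiv ℝ (fun p : ℝ × ℝ => g p.1 p.2)) (ν, μ) (1, 0) (0, 1)) ν := by
  set G := fun p : ℝ × ℝ => g p.1 p.2 with hG
  have hG1 : ContDiff ℝ 1 (fderiv ℝ G) := hg.fderiv_right (by norm_num)
  have h1 : HasDerivAt (fun t : ℝ => fderiv ℝ G (t, μ)) (fderiv ℝ (fderiv ℝ G) (ν, μ) (1, 0)) ν :=
    ((hG1.differentiable one_ne_zero).differentiableAt.hasFDerivAt).comp_hasDerivAt ν
      ((hasDerivAt_id ν).prodMk (hasDerivAt_const ν μ))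
  have h2 : HasDerivAt (fun t : ℝ => fderiv ℝ G (t, μ) ((0:ℝ), (1:ℝ)))
      (fderiv ℝ (fderiv ℝ G) (ν, μ) (1, 0) (0, 1)) ν := by
    simpa using h1.clm_apply (hasDerivAt_const ν ((0:ℝ), (1:ℝ)))
  have : (fun t => d2 g t μ) = fun t : ℝ => fderiv ℝ G (t, μ) ((0:ℝ), (1:ℝ)) := by
    funext t; exact d2_eq g hg t μ
  rw [this]; exact h2

lemma hasDerivAt_d1_snd (ν μ : ℝ) :
    HasDerivAt (fun t => d1 g ν t)
      (fderiv ℝ (fderiv ℝ (fun p : ℝ × ℝ => g p.1 p.2)) (ν, μ) (0, 1) (1, 0)) μ := by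
  set G := fun p : ℝ × ℝ => g p.1 p.2 with hG
  have hG1 : ContDiff ℝ 1 (fderiv ℝ G) := hg.fderiv_right (by norm_num)
  have h1 : HasDerivAt (fun t : ℝ => fderiv ℝ G (ν, t)) (fderiv ℝ (fderiv ℝ G) (ν, μ) (0, 1)) μ :=
    ((hG1.differentiable one_ne_zero).differentiableAt.hasFDerivAt).comp_hasDerivAt μ
      ((hasDerivAt_const μ ν).prodMk (hasDerivAt_id μ))
  have h2 : HasDerivAt (fun t : ℝ => fderiv ℝ G (ν, t) ((1:ℝ), (0:ℝ)))
      (fderiv ℝ (fderiv ℝ G) (ν, μ) (0, 1) (1, 0)) μ := by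
    simpa using h1.clm_apply (hasDerivAt_const μ ((1:ℝ), (0:ℝ)))
  have : (fun t => d1 g ν t) = fun t : ℝ => fderiv ℝ G (ν, t) ((1:ℝ), (0:ℝ)) := by
    funext t; exact d1_eq g hg ν t
  rw [this]; exact h2

lemma deriv_d1_snd_eq_d12 (ν μ : ℝ) : deriv (fun t => d1 g ν t) μ = d12 g ν μ := by
  have hsym : IsSymmSndFDerivAt ℝ (fun p : ℝ × ℝ => g p.1 p.2) (ν, μ) :=
    hg.contDiffAt.isSymmSndFDerivAt (by norm_num)
  rw [(hasDerivAt_d1_snd g hg ν μ).deriv, show d12 g ν μ = _ from (hasDerivAt_d2_fst g hg ν μ).deriv]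
  exact hsym _ _

end aux

lemma anti_d1 (g : ℝ → ℝ → ℝ) (hg : ContDiff ℝ 2 (fun p : ℝ × ℝ => g p.1 p.2))
    (lam : ℝ) (hlam : 0 < lam) (htw : ∀ ν μ : ℝ, d12 g ν μ ≤ -lam) (ν : ℝ) :
    StrictAnti (fun t => d1 g ν t) := by
  apply strictAnti_of_deriv_neg
  intro μ
  rw [deriv_d1_snd_eq_d12 g hg ν μ]
  linarith [htw ν μ]

lemma anti_d2 (g : ℝ → ℝ → ℝ)
    (lam : ℝ) (hlam : 0 < lam) (htw : ∀ ν μ : ℝ, d12 g ν μ ≤ -lam) (μ : ℝ) :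
    StrictAnti (fun t => d2 g t μ) := by
  apply strictAnti_of_deriv_neg
  intro ν
  have : deriv (fun t => d2 g t μ) ν = d12 g ν μ := rfl
  rw [this]
  linarith [htw ν μ]

open Finset in
lemma eqstep (r : ℕ) (hr : 1 ≤ r) (lam : ℝ) (hlam : 0 < lam)
    (f : ℕ → ℝ → ℝ → ℝ)
    (hsmooth : ∀ j, ContDiff ℝ 2 (fun p : ℝ × ℝ => f j p.1 p.2))
    (htwist : ∀ j ∈ Finset.Icc 1 r, ∀ ν μ : ℝ, d12 (f j) ν μ ≤ -lam)
    (x y : ℤ → ℝ) (hord : ∀ i : ℤ, y i ≤ x i) (i : ℤ)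
    (hx : SolvesEL r f x i) (hy : SolvesEL r f y i)
    (hi : x i = y i) : x (i + 1) = y (i + 1) ∧ x (i - 1) = y (i - 1) := by
  have h1r : (1 : ℕ) ∈ Finset.Icc 1 r := by simp [hr]
  have hle : ∀ j ∈ Finset.Icc 1 r,
      d1 (f j) (x i) (x (i + j)) + d2 (f j) (x (i - j)) (x i) ≤
      d1 (f j) (x i) (y (i + j)) + d2 (f j) (y (i - j)) (x i) := by
    intro j hj
    have a1 := (anti_d1 (f j) (hsmooth j) lam hlam (htwist j hj) (x i)).antitone (hord (i + j))
    have a2 := (anti_d2 (f j) lam hlam (htwist j hj) (x i)).antitone (hord (i - j))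
    linarith
  have hsum : (∑ j ∈ Finset.Icc 1 r, (d1 (f j) (x i) (x (i + j)) + d2 (f j) (x (i - j)) (x i))) =
      ∑ j ∈ Finset.Icc 1 r, (d1 (f j) (x i) (y (i + j)) + d2 (f j) (y (i - j)) (x i)) := by
    rw [hx]
    rw [show (∑ j ∈ Finset.Icc 1 r, (d1 (f j) (x i) (y (i + j)) + d2 (f j) (y (i - j)) (x i))) =
      ∑ j ∈ Finset.Icc 1 r, (d1 (f j) (y i) (y (i + j)) + d2 (f j) (y (i - j)) (y i)) by
        rw [hi]]
    rw [hy]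
  have heq := (Finset.sum_eq_sum_iff_of_le hle).mp hsum 1 h1r
  have a1 := (anti_d1 (f 1) (hsmooth 1) lam hlam (htwist 1 h1r) (x i)).antitone (hord (i + 1))
  have a2 := (anti_d2 (f 1) lam hlam (htwist 1 h1r) (x i)).antitone (hord (i - 1))
  push_cast at heq
  constructor
  · refine ((anti_d1 (f 1) (hsmooth 1) lam hlam (htwist 1 h1r) (x i)).injective ?_)
    show d1 (f 1) (x i) (x (i + 1)) = d1 (f 1) (x i) (y (i + 1))
    linarith
  · refine ((anti_d2 (f 1) lam hlam (htwist 1 h1r) (x i)).injective ?_)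
    show d2 (f 1) (x (i - 1)) (x i) = d2 (f 1) (y (i - 1)) (x i)
    linarith

/-- If `x ≠ y` are solutions of the variational monotone recurrence relation on all of `ℤ`
and `x ≥ y`, then `x ≫ y`: `x_i > y_i` for every `i`. -/
theorem stmt5 (r : ℕ) (hr : 1 ≤ r) (lam : ℝ) (hlam : 0 < lam)
    (f : ℕ → ℝ → ℝ → ℝ)
    (hsmooth : ∀ j, ContDiff ℝ 2 (fun p : ℝ × ℝ => f j p.1 p.2))
    (htwist : ∀ j ∈ Finset.Icc 1 r, ∀ ν μ : ℝ, d12 (f j) ν μ ≤ -lam)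
    (x y : ℤ → ℝ)
    (hELx : ∀ i : ℤ, SolvesEL r f x i) (hELy : ∀ i : ℤ, SolvesEL r f y i)
    (hne : x ≠ y) (hord : ∀ i : ℤ, y i ≤ x i) :
    ∀ i : ℤ, y i < x i := by
  by_contra hcon
  push_neg at hcon
  obtain ⟨i, hi⟩ := hcon
  have hi : x i = y i := le_antisymm hi (hord i)
  apply hne
  funext k
  have step : ∀ m : ℤ, x m = y m → x (m + 1) = y (m + 1) ∧ x (m - 1) = y (m - 1) := by
    intro m hm
    exact eqstep r hr lam hlam f hsmooth htwist x y hord m (hELx m) (hELy m) hm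
  have key : ∀ d : ℕ, x (i + d) = y (i + d) ∧ x (i - d) = y (i - d) := by
    intro d
    induction d with
    | zero => simpa using hi
    | succ n ih =>
      constructor
      · have h := (step (i + n) ih.1).1
        have e : i + ((n : ℤ) + 1) = (i + n) + 1 := by ring
        push_cast
        rw [e]; exact h
      · have h := (step (i - n) ih.2).2
        have e : i - ((n : ℤ) + 1) = (i - n) - 1 := by ring
        push_cast
        rw [e]; exact h
  rcases le_total i k with h | h
  · obtain ⟨n, hn⟩ := Int.le.dest h
    rw [← hn]; exact (key n).1
  · obtain ⟨n, hn⟩ := Int.le.dest h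
    rw [show k = i - (n : ℤ) by omega]; exact (key n).2
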